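/- (Regret matching⁺ regret bound) Consider an online decision process over the simplex Δ^m with linear loss vectors ℓ^t ∈ [0, L]^m. Regret matching⁺ maintains pseudoregrets q^{1:t} = max(0, q^{1:t−1} + ρ^t) componentwise, with q^{1:0} = 0 and instantaneous regret ρ^t = ⟨ℓ^t, σ^t⟩·1 − ℓ^t, playing σ^t = q^{1:t−1}/(1ᵀq^{1:t−1}) when 1ᵀq^{1:t−1} > 0 and the uniform distribution otherwise. Then after T rounds, the cumulative regret max_{σ ∈ Δ^m} Σ_{t=1}^T (⟨ℓ^t, σ^t⟩ − ⟨ℓ^t, σ⟩) is at most L·√(Tm). -/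

import Mathlib

/-- Regret matching⁺ regret bound for linear losses in `[0, L]^m`:
cumulative regret after `T` rounds is at most `L√(Tm)`. -/
theorem regret_matching_plus_bound (m T : ℕ) (hm : 0 < m) (L : ℝ) (hL : 0 ≤ L)
    (ℓ : ℕ → Fin m → ℝ) (hℓ : ∀ t i, ℓ t i ∈ Set.Icc (0 : ℝ) L)
    (σ q : ℕ → Fin m → ℝ)
    (hq0 : q 0 = 0)
    (hσ : ∀ t, (0 < ∑ i, q t i ∧ ∀ i, σ t i = q t i / ∑ j, q t j) ∨
               (¬ 0 < ∑ i, q t i ∧ ∀ i, σ t i = 1 / m))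
    (hqrec : ∀ t i,
      q (t + 1) i = max 0 (q t i + ((∑ j, ℓ t j * σ t j) - ℓ t i)))
    (σ' : Fin m → ℝ) (hσ' : σ' ∈ stdSimplex ℝ (Fin m)) :
    ∑ t ∈ Finset.range T, ((∑ i, ℓ t i * σ t i) - ∑ i, ℓ t i * σ' i) ≤
      L * Real.sqrt ((T : ℝ) * m) := by
  set ρ : ℕ → Fin m → ℝ := fun t i => (∑ j, ℓ t j * σ t j) - ℓ t i with hρdef
  have hqnn : ∀ t i, 0 ≤ q t i := by
    intro t
    induction t with
    | zero => intro i; simp [hq0]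
    | succ n ih => intro i; rw [hqrec]; exact le_max_left 0 _
  have hσnn : ∀ t i, 0 ≤ σ t i := by
    intro t i
    rcases hσ t with ⟨hs, h⟩ | ⟨hs, h⟩
    · rw [h]; exact div_nonneg (hqnn t i) (Finset.sum_nonneg fun j _ => hqnn t j)
    · rw [h]; positivity
  have hσsum : ∀ t, ∑ i, σ t i = 1 := by
    intro t
    rcases hσ t with ⟨hs, h⟩ | ⟨hs, h⟩
    · simp only [h]; rw [← Finset.sum_div, div_self hs.ne']
    · simp only [h]
      rw [Finset.sum_const, Finset.card_univ, Fintype.card_fin]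
      rw [nsmul_eq_mul]; field_simp [(Nat.cast_pos.mpr hm).ne']
  have hA : ∀ t, 0 ≤ (∑ j, ℓ t j * σ t j) ∧ (∑ j, ℓ t j * σ t j) ≤ L := by
    intro t
    refine ⟨Finset.sum_nonneg fun j _ => mul_nonneg (hℓ t j).1 (hσnn t j), ?_⟩
    calc ∑ j, ℓ t j * σ t j ≤ ∑ j, L * σ t j :=
          Finset.sum_le_sum fun j _ => mul_le_mul_of_nonneg_right (hℓ t j).2 (hσnn t j)
      _ = L := by rw [← Finset.mul_sum, hσsum t, mul_one]
  have hρ_sq : ∀ t i, (ρ t i) ^ 2 ≤ L ^ 2 := by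
    intro t i
    have h1 := (hA t).1; have h2 := (hA t).2
    have h3 := (hℓ t i).1; have h4 := (hℓ t i).2
    have habs : |ρ t i| ≤ L := by
      rw [abs_le]; constructor <;> simp only [hρdef] <;> [linarith; linarith]
    calc (ρ t i) ^ 2 = |ρ t i| ^ 2 := (sq_abs _).symm
      _ ≤ L ^ 2 := pow_le_pow_left₀ (abs_nonneg _) habs 2
  have hqρ : ∀ t, ∑ i, q t i * ρ t i = 0 := by
    intro t
    rcases hσ t with ⟨hs, h⟩ | ⟨hs, h⟩
    · have hAeq : (∑ j, ℓ t j * σ t j) * (∑ j, q t j) = ∑ j, q t j * ℓ t j := by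
        have : ∑ j, ℓ t j * σ t j = (∑ j, q t j * ℓ t j) / (∑ j, q t j) := by
          simp only [h]
          rw [Finset.sum_div]
          apply Finset.sum_congr rfl; intro j _; ring
        rw [this, div_mul_cancel₀ _ hs.ne']
      simp only [hρdef, mul_sub]
      rw [Finset.sum_sub_distrib, ← Finset.sum_mul]
      rw [mul_comm, hAeq]
      ring
    · have hz : ∀ i, q t i = 0 := by
        have hsum : ∑ i, q t i = 0 :=
          le_antisymm (not_lt.mp hs) (Finset.sum_nonneg fun j _ => hqnn t j)
        intro i
        have := (Finset.sum_eq_zero_iff_of_nonneg (fun j _ => hqnn t j)).mp hsum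
        exact this i (Finset.mem_univ i)
      simp [hz]
  have hS2 : ∀ t, ∑ i, (q (t + 1) i) ^ 2 ≤ ∑ i, (q t i) ^ 2 + L ^ 2 * m := by
    intro t
    have key : ∀ i, (q (t + 1) i) ^ 2 ≤ (q t i + ρ t i) ^ 2 := by
      intro i
      rw [hqrec]
      rcases le_or_gt (q t i + ρ t i) 0 with h | h
      · rw [max_eq_left h]; simpa using sq_nonneg (q t i + ρ t i)
      · rw [max_eq_right h.le]
    calc ∑ i, (q (t + 1) i) ^ 2 ≤ ∑ i, (q t i + ρ t i) ^ 2 :=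
          Finset.sum_le_sum fun i _ => key i
      _ = ∑ i, ((q t i) ^ 2 + 2 * (q t i * ρ t i) + (ρ t i) ^ 2) := by
          apply Finset.sum_congr rfl; intro i _; ring
      _ = ∑ i, (q t i) ^ 2 + 2 * (∑ i, q t i * ρ t i) + ∑ i, (ρ t i) ^ 2 := by
          rw [Finset.sum_add_distrib, Finset.sum_add_distrib, Finset.mul_sum]
      _ ≤ ∑ i, (q t i) ^ 2 + 2 * 0 + ∑ i, (L : ℝ) ^ 2 := by
          have h1 : (2:ℝ) * (∑ i, q t i * ρ t i) = 2 * 0 := by rw [hqρ t]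
          have h2 : ∑ i, (ρ t i) ^ 2 ≤ ∑ i, (L : ℝ) ^ 2 :=
            Finset.sum_le_sum fun i _ => hρ_sq t i
          linarith
      _ = ∑ i, (q t i) ^ 2 + L ^ 2 * m := by
          rw [Finset.sum_const, Finset.card_univ, Fintype.card_fin]
          push_cast; ring
  have hS2T : ∀ t : ℕ, ∑ i, (q t i) ^ 2 ≤ (t : ℝ) * (L ^ 2 * m) := by
    intro t
    induction t with
    | zero => simp [hq0]
    | succ n ih =>
      calc ∑ i, (q (n + 1) i) ^ 2 ≤ ∑ i, (q n i) ^ 2 + L ^ 2 * m := hS2 n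
        _ ≤ (n : ℝ) * (L ^ 2 * m) + L ^ 2 * m := by linarith
        _ = ((n + 1 : ℕ) : ℝ) * (L ^ 2 * m) := by push_cast; ring
  have hcum : ∀ (n : ℕ) i, ∑ t ∈ Finset.range n, ρ t i ≤ q n i := by
    intro n
    induction n with
    | zero => intro i; simp [hq0]
    | succ k ih =>
      intro i
      rw [Finset.sum_range_succ, hqrec]
      calc ∑ t ∈ Finset.range k, ρ t i + ρ k i ≤ q k i + ρ k i :=
            add_le_add_left (ih i) _
        _ ≤ max 0 (q k i + ρ k i) := le_max_right _ _
  have hstep : ∀ t, ((∑ i, ℓ t i * σ t i) - ∑ i, ℓ t i * σ' i) = ∑ i, σ' i * ρ t i := by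
    intro t
    have h1 : ∑ i, σ' i = 1 := hσ'.2
    simp only [hρdef, mul_sub]
    rw [Finset.sum_sub_distrib, ← Finset.sum_mul, h1, one_mul]
    congr 1
    apply Finset.sum_congr rfl; intro i _; ring
  have hqT_le : ∀ i, q T i ≤ Real.sqrt ((T : ℝ) * (L ^ 2 * m)) := by
    intro i
    rw [Real.le_sqrt (hqnn T i)]
    · calc (q T i) ^ 2 ≤ ∑ j, (q T j) ^ 2 :=
            Finset.single_le_sum (f := fun j => (q T j) ^ 2)
              (fun j _ => sq_nonneg _) (Finset.mem_univ i)
        _ ≤ (T : ℝ) * (L ^ 2 * m) := hS2T T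
    · positivity
  have hfinal : Real.sqrt ((T : ℝ) * (L ^ 2 * m)) = L * Real.sqrt ((T : ℝ) * m) := by
    rw [show (T : ℝ) * (L ^ 2 * m) = L ^ 2 * ((T : ℝ) * m) by ring,
      Real.sqrt_mul (sq_nonneg L), Real.sqrt_sq hL]
  calc ∑ t ∈ Finset.range T, ((∑ i, ℓ t i * σ t i) - ∑ i, ℓ t i * σ' i)
      = ∑ t ∈ Finset.range T, ∑ i, σ' i * ρ t i := by
        apply Finset.sum_congr rfl; intro t _; exact hstep t
    _ = ∑ i, σ' i * ∑ t ∈ Finset.range T, ρ t i := by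
        rw [Finset.sum_comm]
        apply Finset.sum_congr rfl; intro i _
        rw [Finset.mul_sum]
    _ ≤ ∑ i, σ' i * q T i := by
        apply Finset.sum_le_sum
        intro i _
        exact mul_le_mul_of_nonneg_left (hcum T i) (hσ'.1 i)
    _ ≤ ∑ i, σ' i * Real.sqrt ((T : ℝ) * (L ^ 2 * m)) := by
        apply Finset.sum_le_sum
        intro i _
        exact mul_le_mul_of_nonneg_left (hqT_le i) (hσ'.1 i)
    _ = Real.sqrt ((T : ℝ) * (L ^ 2 * m)) := by
        rw [← Finset.sum_mul, hσ'.2, one_mul]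
    _ = L * Real.sqrt ((T : ℝ) * m) := hfinal
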